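/- There is no isometric (distance-ratio preserving) map from any open subset of the unit sphere S² into the Euclidean plane; that is, if U ⊆ S² is a nonempty open set and f : U → ℝ² satisfies dist(f x, f y) = c · dist(x, y) for some constant c > 0 and all x, y ∈ U (distance measured intrinsically on the sphere, or extrinsically in ℝ³), then a contradiction follows. -/

import Mathlib

open Module Metric


private lemma exists_triangle_vectors {E : Type*} [NormedAddCommGroup E]
    [InnerProductSpace ℝ E] (p : E) (e : Fin 2 → E)
    (he_orth : ∀ i j, (inner ℝ (e i) (e j) : ℝ) = if i = j then 1 else 0)
    (hep : ∀ i, (inner ℝ p (e i) : ℝ) = 0) :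
    ∃ v : Fin 3 → E, (∀ k, (inner ℝ p (v k) : ℝ) = 0) ∧
      (∀ k, (inner ℝ (v k) (v k) : ℝ) = 1) ∧
      (∀ j k, j ≠ k → (inner ℝ (v j) (v k) : ℝ) = -(1/2)) := by
  refine ⟨![e 0, (-(1:ℝ)/2) • e 0 + (Real.sqrt 3/2) • e 1,
    (-(1:ℝ)/2) • e 0 - (Real.sqrt 3/2) • e 1], ?_, ?_, ?_⟩
  · intro k
    fin_cases k <;>
      simp [inner_add_right, inner_sub_right, inner_smul_right, hep]
  · intro k
    fin_cases k <;>
      (simp [inner_add_left, inner_add_right, inner_sub_left, inner_sub_right,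
          inner_smul_left, inner_smul_right, he_orth, -inner_self_eq_norm_sq_to_K];
       try nlinarith [Real.sq_sqrt (show (0:ℝ) ≤ 3 by norm_num)])
  · intro j k hjk
    fin_cases j <;> fin_cases k <;>
      first
      | exact absurd rfl hjk
      | (simp [inner_add_left, inner_add_right, inner_sub_left, inner_sub_right,
            inner_smul_left, inner_smul_right, he_orth, -inner_self_eq_norm_sq_to_K];
         try nlinarith [Real.sq_sqrt (show (0:ℝ) ≤ 3 by norm_num)])

set_option maxHeartbeats 1000000 in
/-- Euler's theorem: no geographical map preserves ratios of lengths.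
There is no map from a nonempty open subset of the unit sphere `S² ⊆ ℝ³` into
the Euclidean plane that scales all distances by a fixed ratio `c > 0`. -/
theorem no_scaled_isometry_sphere_to_plane
    (U : Set (Metric.sphere (0 : EuclideanSpace ℝ (Fin 3)) 1))
    (hU : IsOpen U) (hne : U.Nonempty)
    (f : U → EuclideanSpace ℝ (Fin 2)) (c : ℝ) (hc : 0 < c)
    (hf : ∀ x y : U, dist (f x) (f y) = c * dist x y) : False := by
  classical
  set E := EuclideanSpace ℝ (Fin 3)
  obtain ⟨P0, hP0⟩ := hne
  set p : E := (P0 : E) with hp_def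
  have hpnorm : ‖p‖ = 1 := by
    have := P0.2
    simpa [hp_def, mem_sphere_iff_norm] using this
  have hpne : p ≠ 0 := by
    intro h; rw [h] at hpnorm; simp at hpnorm
  -- an orthonormal basis of the orthogonal complement of p
  haveI : Fact (finrank ℝ E = 2 + 1) := ⟨by simp [E, finrank_euclideanSpace_fin]⟩
  have hrank : finrank ℝ ((ℝ ∙ p)ᗮ : Submodule ℝ E) = 2 :=
    Submodule.finrank_orthogonal_span_singleton hpne
  let b : OrthonormalBasis (Fin 2) ℝ ((ℝ ∙ p)ᗮ : Submodule ℝ E) :=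
    (stdOrthonormalBasis ℝ _).reindex (finCongr hrank)
  let e : Fin 2 → E := fun i => (b i : E)
  have he_orth : ∀ i j, (inner ℝ (e i) (e j) : ℝ) = if i = j then 1 else 0 := by
    intro i j
    have := b.orthonormal
    rw [orthonormal_iff_ite] at this
    simpa [e, Submodule.coe_inner] using this i j
  have hep : ∀ i, (inner ℝ p (e i) : ℝ) = 0 := by
    intro i
    have hm : (b i : E) ∈ (ℝ ∙ p)ᗮ := (b i).2
    have := hm p (Submodule.mem_span_singleton_self p)
    simpa [e, real_inner_comm] using this
  -- three unit vectors in the tangent plane at mutual angle 120°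
  obtain ⟨v, hvp, hvn, hvv⟩ := exists_triangle_vectors p e he_orth hep
  -- a small radius
  obtain ⟨ε, hε, hball⟩ := Metric.isOpen_iff.mp hU P0 hP0
  set t : ℝ := min (ε / 2) (1 / 2) with ht_def
  have ht : 0 < t := lt_min (by linarith) (by norm_num)
  have ht1 : t ≤ 1 / 2 := min_le_right _ _
  have htε : t ≤ ε / 2 := min_le_left _ _
  have ht2 : t ^ 2 < 1 := by nlinarith
  set s : ℝ := Real.sqrt (1 - t ^ 2) with hs_def
  have hs2 : s ^ 2 = 1 - t ^ 2 := Real.sq_sqrt (by nlinarith)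
  have hs0 : 0 ≤ s := Real.sqrt_nonneg _
  have hs_ge : 1 - t ^ 2 ≤ s := by
    rw [hs_def]
    nlinarith [Real.sq_sqrt (show (0:ℝ) ≤ 1 - t ^ 2 by nlinarith),
      Real.sqrt_nonneg (1 - t ^ 2), sq_nonneg (Real.sqrt (1 - t ^ 2) - (1 - t ^ 2))]
  -- the three points on the sphere
  set a : Fin 3 → E := fun k => s • p + t • v k with ha_def
  have hip : (inner ℝ p p : ℝ) = 1 := by
    rw [real_inner_self_eq_norm_sq, hpnorm]; norm_num
  have ha_norm : ∀ k, (inner ℝ (a k) (a k) : ℝ) = 1 := by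
    intro k
    have hcomm : (inner ℝ (v k) p : ℝ) = 0 := by rw [real_inner_comm]; exact hvp k
    simp only [ha_def, inner_add_left, inner_add_right, inner_smul_left, inner_smul_right,
      hip, hvn, hcomm, hvp, starRingEnd_apply, star_trivial]
    nlinarith [hs2]
  have ha_mem : ∀ k, a k ∈ Metric.sphere (0 : E) 1 := by
    intro k
    have h := ha_norm k
    rw [real_inner_self_eq_norm_sq] at h
    have : ‖a k‖ = 1 := by nlinarith [norm_nonneg (a k)]
    simpa [mem_sphere_iff_norm] using this
  -- distances from p and pairwise distances
  have hdist_p : ∀ k, dist (a k) p ^ 2 = 2 - 2 * s := by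
    intro k
    rw [dist_eq_norm, ← real_inner_self_eq_norm_sq]
    have hdiff : a k - p = (s - 1) • p + t • v k := by
      simp only [ha_def]; module
    rw [hdiff]
    have hcomm : (inner ℝ (v k) p : ℝ) = 0 := by rw [real_inner_comm]; exact hvp k
    simp only [inner_add_left, inner_add_right, inner_smul_left, inner_smul_right,
      hip, hvn, hcomm, hvp, starRingEnd_apply, star_trivial]
    nlinarith [hs2]
  have hdist_pair : ∀ j k, j ≠ k → dist (a j) (a k) ^ 2 = 3 * t ^ 2 := by
    intro j k hjk
    rw [dist_eq_norm, ← real_inner_self_eq_norm_sq]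
    have hdiff : a j - a k = t • (v j - v k) := by
      simp only [ha_def]; module
    rw [hdiff]
    simp only [inner_smul_left, inner_smul_right, inner_sub_left, inner_sub_right,
      hvn, hvv j k hjk, hvv k j (Ne.symm hjk), starRingEnd_apply, star_trivial]
    ring
  -- the points lie in U
  have hA_mem : ∀ k, (⟨a k, ha_mem k⟩ : Metric.sphere (0 : E) 1) ∈ U := by
    intro k
    apply hball
    rw [Metric.mem_ball, Subtype.dist_eq]
    have h := hdist_p k
    have hd0 : 0 ≤ dist (a k) p := dist_nonneg
    have : dist (a k) p ^ 2 ≤ 2 * t ^ 2 := by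
      rw [h]; nlinarith [hs_ge]
    show dist (a k) (P0 : E) < ε
    rw [← hp_def]
    nlinarith
  set P : U := ⟨P0, hP0⟩ with hP_def
  set A : Fin 3 → U := fun k => ⟨⟨a k, ha_mem k⟩, hA_mem k⟩ with hA_def
  have hdA_p : ∀ k, dist (A k) P = dist (a k) p := by
    intro k
    rw [Subtype.dist_eq, Subtype.dist_eq]
  have hdA_pair : ∀ j k, dist (A j) (A k) = dist (a j) (a k) := by
    intro j k
    rw [Subtype.dist_eq, Subtype.dist_eq]
  -- the image vectors
  set u : Fin 3 → EuclideanSpace ℝ (Fin 2) := fun k => f (A k) - f P with hu_def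
  have hu_norm : ∀ k, ‖u k‖ ^ 2 = c ^ 2 * (2 - 2 * s) := by
    intro k
    have : ‖u k‖ = dist (f (A k)) (f P) := by rw [dist_eq_norm]
    rw [this, hf, hdA_p]
    rw [mul_pow]
    rw [hdist_p]
  have hu_pair : ∀ j k, j ≠ k → ‖u j - u k‖ ^ 2 = c ^ 2 * (3 * t ^ 2) := by
    intro j k hjk
    have h1 : u j - u k = f (A j) - f (A k) := by rw [hu_def]; exact sub_sub_sub_cancel_right _ _ _
    have : ‖u j - u k‖ = dist (f (A j)) (f (A k)) := by rw [h1, dist_eq_norm]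
    rw [this, hf, hdA_pair, mul_pow, hdist_pair j k hjk]
  have hu_inner : ∀ j k, j ≠ k →
      (inner ℝ (u j) (u k) : ℝ) = c ^ 2 * (2 - 2 * s) - c ^ 2 * (3 * t ^ 2) / 2 := by
    intro j k hjk
    have h := norm_sub_sq_real (u j) (u k)
    rw [hu_pair j k hjk, hu_norm j, hu_norm k] at h
    linarith
  have hu_self : ∀ k, (inner ℝ (u k) (u k) : ℝ) = c ^ 2 * (2 - 2 * s) := by
    intro k
    rw [real_inner_self_eq_norm_sq, hu_norm]
  -- three vectors in the plane are linearly dependent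
  have hdep : ¬ LinearIndependent ℝ u := by
    intro h
    have := h.fintype_card_le_finrank
    rw [finrank_euclideanSpace_fin] at this
    simp at this
  obtain ⟨g, hgsum, i, hgi⟩ := Fintype.not_linearIndependent_iff.mp hdep
  -- take inner ℝ products of the dependence relation with each u j
  have heq : ∀ j, g 0 * (inner ℝ (u j) (u 0) : ℝ) + g 1 * inner ℝ (u j) (u 1)
      + g 2 * inner ℝ (u j) (u 2) = 0 := by
    intro j
    have h : (inner ℝ (u j) (∑ i, g i • u i) : ℝ) = 0 := by rw [hgsum, inner_zero_right]
    rw [Fin.sum_univ_three] at h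
    rw [inner_add_right, inner_add_right, real_inner_smul_right,
      real_inner_smul_right, real_inner_smul_right] at h
    linarith
  set R : ℝ := c ^ 2 * (2 - 2 * s) with hR_def
  set τ : ℝ := c ^ 2 * (2 - 2 * s) - c ^ 2 * (3 * t ^ 2) / 2 with hτ_def
  have e0 := heq 0
  have e1 := heq 1
  have e2 := heq 2
  rw [hu_self 0, hu_inner 0 1 (by decide), hu_inner 0 2 (by decide)] at e0
  rw [hu_inner 1 0 (by decide), hu_self 1, hu_inner 1 2 (by decide)] at e1
  rw [hu_inner 2 0 (by decide), hu_inner 2 1 (by decide), hu_self 2] at e2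
  have hRτ : R - τ = c ^ 2 * (3 * t ^ 2) / 2 := by rw [hR_def, hτ_def]; ring
  have hRτ_pos : 0 < R - τ := by rw [hRτ]; positivity
  have h01 : g 0 = g 1 := by
    have hd : (g 0 - g 1) * (R - τ) = 0 := by linear_combination e0 - e1
    rcases mul_eq_zero.mp hd with h | h
    · linarith
    · linarith
  have h12 : g 1 = g 2 := by
    have hd : (g 1 - g 2) * (R - τ) = 0 := by linear_combination e1 - e2
    rcases mul_eq_zero.mp hd with h | h
    · linarith
    · linarith
  have hg0 : g 0 ≠ 0 := by
    fin_cases i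
    · exact hgi
    · rw [h01]; exact hgi
    · rw [h01, h12]; exact hgi
  have hfin : g 0 * (R + 2 * τ) = 0 := by
    rw [h01, h12] at e0 ⊢
    rw [← h12] at e0 ⊢
    linear_combination e0
  have hR2τ : R + 2 * τ = 0 := by
    rcases mul_eq_zero.mp hfin with h | h
    · exact absurd h hg0
    · exact h
  -- final contradiction: 3c²(2 - 2s - t²) = 0 but 2 - 2s - t² = (1-s)² and s < 1
  rw [hR_def, hτ_def] at hR2τ
  have hkey : 2 - 2 * s - t ^ 2 = 0 := by
    have hc2 : (0:ℝ) < c ^ 2 := by positivity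
    nlinarith [hR2τ]
  have ht2p : 0 < t ^ 2 := by positivity
  have h1s : 0 < 1 - s := by linarith
  have hsq : 0 < (1 - s) * (1 - s) := mul_pos h1s h1s
  nlinarith [hs2, hkey, hsq]
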